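/- Suppose a red/blue coloring of K_{n+m−1} has no red K_{1,n} and no blue K_{1,m}+e, where 3 ≤ n ≤ m−2. Then every vertex has red degree exactly n−1 and blue degree exactly m−1. -/

import Mathlib

open SimpleGraph Finset

/-- `Contains G H` : the graph `G` contains a copy of `H`. -/
def Contains {V W : Type*} (G : SimpleGraph V) (H : SimpleGraph W) : Prop :=
  ∃ f : W → V, Function.Injective f ∧ ∀ a b, H.Adj a b → G.Adj (f a) (f b)

/-- The star `K_{1,n}` on `n+1` vertices: vertex `0` is joined to all others. -/
def starG (n : ℕ) : SimpleGraph (Fin (n + 1)) :=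
  SimpleGraph.fromRel (fun a _ => a = 0)

/-- `K_{1,m}+e` on `m+1` vertices: vertex `0` joined to all others, plus the edge `{1,2}`. -/
def starPlusE (m : ℕ) : SimpleGraph (Fin (m + 1)) :=
  SimpleGraph.fromRel (fun a b => a = 0 ∨ (a = 1 ∧ b = 2))

lemma aux_inj {α : Type*} (s : Finset α) (k : ℕ) (h : k ≤ s.card) :
    ∃ g : Fin k → α, Function.Injective g ∧ ∀ i, g i ∈ s := by
  have hc : k ≤ Fintype.card ↥s := by rwa [Fintype.card_coe]
  let e := (Fintype.equivFin ↥s).symm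
  refine ⟨fun i => (e (Fin.castLE hc i) : α), ?_, fun i => (e (Fin.castLE hc i)).2⟩
  intro a b hab
  exact Fin.castLE_injective hc (e.injective (Subtype.coe_injective hab))

lemma aux_star {V : Type*} [Fintype V] [DecidableEq V] (G : SimpleGraph V)
    [DecidableRel G.Adj] (n : ℕ) (h : ¬ Contains G (starG n)) (v : V) :
    G.degree v < n := by
  by_contra hle
  push_neg at hle
  obtain ⟨g, hginj, hgmem⟩ := aux_inj (G.neighborFinset v) n hle
  apply h
  refine ⟨Fin.cases v g, ?_, ?_⟩
  · intro a b hab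
    induction a using Fin.cases with
    | zero =>
      induction b using Fin.cases with
      | zero => rfl
      | succ j =>
        exfalso
        simp only [Fin.cases_zero, Fin.cases_succ] at hab
        have := hgmem j
        rw [← hab] at this
        exact G.notMem_neighborFinset_self v this
    | succ i =>
      induction b using Fin.cases with
      | zero =>
        exfalso
        simp only [Fin.cases_zero, Fin.cases_succ] at hab
        have := hgmem i
        rw [hab] at this
        exact G.notMem_neighborFinset_self v this
      | succ j =>
        simp only [Fin.cases_succ] at hab
        rw [hginj hab]
  · intro a b hab
    rw [starG, SimpleGraph.fromRel_adj] at hab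
    obtain ⟨hne, h0⟩ := hab
    rcases h0 with h0 | h0
    · subst h0
      induction b using Fin.cases with
      | zero => exact absurd rfl hne
      | succ j =>
        simp only [Fin.cases_zero, Fin.cases_succ]
        exact (G.mem_neighborFinset v _).1 (hgmem j)
    · subst h0
      induction a using Fin.cases with
      | zero => exact absurd rfl (Ne.symm hne)
      | succ j =>
        simp only [Fin.cases_zero, Fin.cases_succ]
        exact ((G.mem_neighborFinset v _).1 (hgmem j)).symm

lemma aux_starPlusE {V : Type*} [Fintype V] [DecidableEq V] (G : SimpleGraph V)
    [DecidableRel G.Adj] (n m : ℕ) (hn : 3 ≤ n) (hnm : n + 2 ≤ m)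
    (hred : ¬ Contains G (starG n)) (hblue : ¬ Contains Gᶜ (starPlusE m)) (v : V) :
    Gᶜ.degree v < m := by
  by_contra hle
  push_neg at hle
  set s := Gᶜ.neighborFinset v with hs
  have hcard : m ≤ s.card := hle
  have hv : v ∉ s := Gᶜ.notMem_neighborFinset_self v
  by_cases hcl : ∃ u ∈ s, ∃ w ∈ s, Gᶜ.Adj u w
  · obtain ⟨u, hu, w, hw, huw⟩ := hcl
    have hune : u ≠ w := huw.ne
    have hcard' : m - 2 ≤ ((s.erase u).erase w).card := by
      have h1 := Finset.pred_card_le_card_erase (a := u) (s := s)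
      have h2 := Finset.pred_card_le_card_erase (a := w) (s := s.erase u)
      omega
    obtain ⟨g, hginj, hgmem⟩ := aux_inj ((s.erase u).erase w) (m - 2) hcard'
    have hgne : ∀ i, g i ≠ u ∧ g i ≠ w ∧ g i ∈ s := by
      intro i
      have h1 := Finset.mem_erase.1 (hgmem i)
      have h2 := Finset.mem_erase.1 h1.2
      exact ⟨h2.1, h1.1, h2.2⟩
    let f : Fin (m + 1) → V := fun i =>
      if i.val = 0 then v else if i.val = 1 then u else if i.val = 2 then w
      else g ⟨i.val - 3, by omega⟩
    have hfs : ∀ i : Fin (m + 1), i.val ≠ 0 → f i ∈ s := by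
      intro i hi
      simp only [f]
      split_ifs with h0 h1 h2
      · exact absurd h0 hi
      · exact hu
      · exact hw
      · exact (hgne _).2.2
    apply hblue
    refine ⟨f, ?_, ?_⟩
    · intro a b hab
      have := a.isLt; have := b.isLt
      simp only [f] at hab
      split_ifs at hab with h0 h1 h2 h3 h4 h5 h6 h7 h8 h9 h10 h11 h12 h13 h14 <;>
        first
          | (apply Fin.ext; omega)
          | (apply Fin.ext
             have hval := congrArg Fin.val (hginj hab)
             simp only [] at hval
             omega)
          | (exfalso; first
              | exact hv (hab ▸ hu)
              | exact hv (hab ▸ hw)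
              | exact hv (hab ▸ (hgne _).2.2)
              | exact hv (hab.symm ▸ hu)
              | exact hv (hab.symm ▸ hw)
              | exact hv (hab.symm ▸ (hgne _).2.2)
              | exact hune hab
              | exact hune hab.symm
              | exact (hgne _).1 hab
              | exact (hgne _).1 hab.symm
              | exact (hgne _).2.1 hab
              | exact (hgne _).2.1 hab.symm)
    · intro a b hab
      rw [starPlusE, SimpleGraph.fromRel_adj] at hab
      obtain ⟨hne, hcases⟩ := hab
      have hvs : ∀ x ∈ s, Gᶜ.Adj v x := fun x hx => (Gᶜ.mem_neighborFinset v x).1 hx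
      have hone : ((1 : Fin (m + 1)) : ℕ) = 1 := by
        rw [Fin.val_one']; exact Nat.mod_eq_of_lt (by omega)
      have htwo : ((2 : Fin (m + 1)) : ℕ) = 2 := by
        have : ((2 : Fin (m + 1)) : ℕ) = 2 % (m + 1) := rfl
        rw [this]; exact Nat.mod_eq_of_lt (by omega)
      have key : ∀ a b : Fin (m + 1), a ≠ b → (a = 0 ∨ (a = 1 ∧ b = 2)) →
          Gᶜ.Adj (f a) (f b) := by
        intro a b hne hc
        rcases hc with h0 | ⟨h1, h2⟩
        · have ha0 : (a : ℕ) = 0 := by rw [h0]; rfl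
          have hb0 : (b : ℕ) ≠ 0 := by
            intro hb0
            exact hne (Fin.ext (by rw [ha0, hb0]))
          have hfa : f a = v := by simp only [f]; rw [if_pos ha0]
          rw [hfa]
          exact hvs _ (hfs b hb0)
        · have ha1 : (a : ℕ) = 1 := by rw [h1, hone]
          have hb2 : (b : ℕ) = 2 := by rw [h2, htwo]
          have hfa : f a = u := by simp only [f]; rw [if_neg (by omega), if_pos ha1]
          have hfb : f b = w := by simp only [f]; rw [if_neg (by omega), if_neg (by omega), if_pos hb2]
          rw [hfa, hfb]
          exact huw
      rcases hcases with hc | hc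
      · exact key a b hne hc
      · exact (key b a hne.symm hc).symm
  · push_neg at hcl
    have hspos : s.Nonempty := Finset.card_pos.1 (by omega)
    obtain ⟨u, hu⟩ := hspos
    have hsub : s.erase u ⊆ G.neighborFinset u := by
      intro x hx
      have hxs := Finset.mem_erase.1 hx
      rw [G.mem_neighborFinset]
      have hnadj := hcl u hu x hxs.2
      have : u ≠ x := fun h => hxs.1 h.symm
      by_contra hadj
      exact hnadj ⟨this, hadj⟩
    have hdeg : m - 1 ≤ G.degree u := by
      have h1 := Finset.card_le_card hsub
      have h2 := Finset.pred_card_le_card_erase (a := u) (s := s)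
      unfold SimpleGraph.degree
      omega
    have := aux_star G n hred u
    omega

theorem stmt_18 (n m : ℕ) (hn : 3 ≤ n) (hnm : n + 2 ≤ m)
    (R : SimpleGraph (Fin (n + m - 1)))
    (hred : ¬ Contains R (starG n)) (hblue : ¬ Contains Rᶜ (starPlusE m)) :
    ∀ v : Fin (n + m - 1),
      (R.neighborSet v).ncard = n - 1 ∧ (Rᶜ.neighborSet v).ncard = m - 1 := by
  classical
  intro v
  have h1 : R.degree v < n := aux_star R n hred v
  have h2 : Rᶜ.degree v < m := aux_starPlusE R n m hn hnm hred hblue v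
  have hcompl : Rᶜ.degree v = Fintype.card (Fin (n + m - 1)) - 1 - R.degree v :=
    SimpleGraph.degree_compl R v
  rw [Fintype.card_fin] at hcompl
  have hr : R.degree v = n - 1 := by omega
  have hb : Rᶜ.degree v = m - 1 := by omega
  constructor
  · rw [← Nat.card_coe_set_eq, Nat.card_eq_fintype_card,
      SimpleGraph.card_neighborSet_eq_degree, hr]
  · rw [← Nat.card_coe_set_eq, Nat.card_eq_fintype_card,
      SimpleGraph.card_neighborSet_eq_degree, hb]
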